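/- There exist a positive integer m and constants 0 < C₁ ≤ C₂ (depending only on n) such that the Heisenberg group H^n admits a Heisenberg dyadic grid with parameters (m, C₁, C₂): that is, a family of Borel sets S_{j,α,τ} ⊆ H^n, indexed by j ∈ mℤ and (α,τ) ∈ K_j := 2^j ℤ^{2n} × 2^{2j} ℤ, such that (i) for each j ∈ mℤ, H^n is the pairwise disjoint union of {S_{j,α,τ} : (α,τ) ∈ K_j}; (ii) the orthogonal projection of S_{j,α,τ} onto C^n is the dyadic cube I_α^j = α + [0,2^j)^{2n}; (iii) B_ρ(c_{j,α,τ}, C₁ 2^j) ⊆ S_{j,α,τ} ⊆ B_ρ(c_{j,α,τ}, C₂ 2^j), where c_{j,α,τ} = (P_{j,α}, τ + 2^{2j−1}) and P_{j,α} is the center of I_α^j; and (iv) any two members of the family are either disjoint or one contains the other. -/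

import Mathlib

open MeasureTheory Complex
open scoped ENNReal

noncomputable section

/-- The underlying space of the Heisenberg group `ℍⁿ = ℂⁿ × ℝ`. -/
abbrev Heis (n : ℕ) := (Fin n → ℂ) × ℝ

/-- Heisenberg group multiplication `(z,u)∘(w,v) = (z+w, u+v+2 Im (z·w̄))`. -/
def Hmul {n : ℕ} (p q : Heis n) : Heis n :=
  (p.1 + q.1, p.2 + q.2 + 2 * (∑ j : Fin n, p.1 j * (starRingEnd ℂ) (q.1 j)).im)

/-- Heisenberg group inverse. -/
def Hinv {n : ℕ} (p : Heis n) : Heis n := (-p.1, -p.2)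

/-- The homogeneous norm `ρ(z,u) = (|z|⁴ + u²)^{1/4}`. -/
def hNorm {n : ℕ} (p : Heis n) : ℝ :=
  ((∑ j : Fin n, Complex.normSq (p.1 j)) ^ 2 + p.2 ^ 2) ^ ((1 : ℝ) / 4)

/-- The quasidistance `d(p,q) = ρ(p ∘ q⁻¹)`. -/
def hDist {n : ℕ} (p q : Heis n) : ℝ := hNorm (Hmul p (Hinv q))

/-- Quasimetric balls `B_ρ(c,r)`. -/
def hBall {n : ℕ} (c : Heis n) (r : ℝ) : Set (Heis n) := {p | hDist c p < r}

/-- The dyadic cube `I_α^j = α + [0,2^j)^{2n}` in `ℂⁿ`, where `α = 2^j a`. -/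
def dyadicCube (n : ℕ) (j : ℤ) (a : Fin n → ℤ × ℤ) : Set (Fin n → ℂ) :=
  {z | ∀ k : Fin n,
    ((2:ℝ)^j * ((a k).1 : ℝ) ≤ (z k).re ∧ (z k).re < (2:ℝ)^j * ((a k).1 : ℝ) + (2:ℝ)^j) ∧
    ((2:ℝ)^j * ((a k).2 : ℝ) ≤ (z k).im ∧ (z k).im < (2:ℝ)^j * ((a k).2 : ℝ) + (2:ℝ)^j)}

/-- The center `P_{j,α}` of the dyadic cube `I_α^j`. -/
def cubeCenter (n : ℕ) (j : ℤ) (a : Fin n → ℤ × ℤ) : Fin n → ℂ :=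
  fun k => (((2:ℝ)^j * ((a k).1 : ℝ) + (2:ℝ)^(j-1) : ℝ) : ℂ) +
    (((2:ℝ)^j * ((a k).2 : ℝ) + (2:ℝ)^(j-1) : ℝ) : ℂ) * Complex.I

/-- The center `c_{j,α,τ} = (P_{j,α}, τ + 2^{2j-1})`, where `τ = 2^{2j} t`. -/
def gridCenter (n : ℕ) (j : ℤ) (a : Fin n → ℤ × ℤ) (t : ℤ) : Heis n :=
  (cubeCenter n j a, (2:ℝ)^(2*j) * (t : ℝ) + (2:ℝ)^(2*j-1))

/-- A Heisenberg dyadic grid with parameters `(m, C₁, C₂)`:  a family of Borel sets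
`S_{j,α,τ} ⊆ ℍⁿ` indexed by `j ∈ mℤ` and `(α,τ) ∈ 2^jℤ^{2n} × 2^{2j}ℤ` such that
(i) for each `j ∈ mℤ` the family is a pairwise disjoint cover of `ℍⁿ`;
(ii) the projection of `S_{j,α,τ}` to `ℂⁿ` is the dyadic cube `I_α^j`;
(iii) `B_ρ(c_{j,α,τ}, C₁2^j) ⊆ S_{j,α,τ} ⊆ B_ρ(c_{j,α,τ}, C₂2^j)`;
(iv) any two members are nested or disjoint. -/
structure HeisGrid (n m : ℕ) (C₁ C₂ : ℝ) where
  S : ℤ → (Fin n → ℤ × ℤ) → ℤ → Set (Heis n)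
  measurableSet_S : ∀ j a t, MeasurableSet (S j a t)
  existsUnique_mem : ∀ j : ℤ, (m : ℤ) ∣ j → ∀ p : Heis n,
    ∃! c : (Fin n → ℤ × ℤ) × ℤ, p ∈ S j c.1 c.2
  proj_eq : ∀ j : ℤ, (m : ℤ) ∣ j → ∀ a t, Prod.fst '' S j a t = dyadicCube n j a
  ball_subset : ∀ j : ℤ, (m : ℤ) ∣ j → ∀ a t,
    hBall (gridCenter n j a t) (C₁ * (2:ℝ)^j) ⊆ S j a t
  subset_ball : ∀ j : ℤ, (m : ℤ) ∣ j → ∀ a t,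
    S j a t ⊆ hBall (gridCenter n j a t) (C₂ * (2:ℝ)^j)
  nested : ∀ j j' : ℤ, (m : ℤ) ∣ j → (m : ℤ) ∣ j' → ∀ a a' t t',
    S j a t ⊆ S j' a' t' ∨ S j' a' t' ⊆ S j a t ∨ Disjoint (S j a t) (S j' a' t')

set_option maxHeartbeats 1000000

namespace HG

/-- basic positivity -/
lemma tzp (j : ℤ) : (0:ℝ) < 2 ^ j := zpow_pos (by norm_num) j

lemma floor_div_eq_iff {x c : ℝ} (hc : 0 < c) {a : ℤ} :
    ⌊x / c⌋ = a ↔ c * a ≤ x ∧ x < c * a + c := by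
  rw [Int.floor_eq_iff]
  constructor
  · rintro ⟨h1, h2⟩
    constructor
    · calc c * a = a * c := mul_comm _ _
        _ ≤ x := by rwa [← le_div_iff₀ hc]
    · have := (div_lt_iff₀ hc).mp h2
      nlinarith
  · rintro ⟨h1, h2⟩
    constructor
    · rw [le_div_iff₀ hc]; nlinarith
    · rw [div_lt_iff₀ hc]; push_cast; nlinarith

lemma floor_div_pieces (x : ℝ) {c : ℝ} (hc : 0 < c) :
    c * ⌊x / c⌋ ≤ x ∧ x < c * ⌊x / c⌋ + c :=
  (floor_div_eq_iff hc).mp rfl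

/-- floor of division by a positive natural -/
lemma floor_div_nat' (y : ℝ) (N : ℕ) (hN : 0 < N) : ⌊y / (N:ℝ)⌋ = ⌊y⌋ / (N:ℤ) := by
  have hNR : (0:ℝ) < (N:ℝ) := by exact_mod_cast hN
  have hNZ : (0:ℤ) < (N:ℤ) := by exact_mod_cast hN
  rw [Int.floor_eq_iff]
  constructor
  · rw [le_div_iff₀ hNR]
    have h1 : ((⌊y⌋ / (N:ℤ)) * N : ℤ) ≤ ⌊y⌋ := Int.ediv_mul_le _ (by exact_mod_cast hN.ne')
    calc ((⌊y⌋ / (N:ℤ) : ℤ):ℝ) * (N:ℝ) = (((⌊y⌋ / (N:ℤ)) * N : ℤ) : ℝ) := by push_cast; ring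
      _ ≤ (⌊y⌋ : ℝ) := by exact_mod_cast h1
      _ ≤ y := Int.floor_le y
  · rw [div_lt_iff₀ hNR]
    have h2 : ⌊y⌋ < (⌊y⌋ / (N:ℤ)) * N + N := by
      have := Int.emod_lt_of_pos ⌊y⌋ hNZ
      have := Int.mul_ediv_add_emod ⌊y⌋ (N:ℤ)
      have : (N:ℤ) * (⌊y⌋ / (N:ℤ)) = (⌊y⌋ / (N:ℤ)) * N := mul_comm _ _
      omega
    calc y < (⌊y⌋:ℝ) + 1 := Int.lt_floor_add_one y
      _ ≤ (((⌊y⌋ / (N:ℤ)) * N + N : ℤ) : ℝ) := by exact_mod_cast h2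
      _ = ((⌊y⌋ / (N:ℤ) : ℤ):ℝ) * N + N := by push_cast; ring
      _ = (((⌊y⌋ / (N:ℤ) : ℤ):ℝ) + 1) * N := by ring

lemma floor_scale (x : ℝ) {c : ℝ} (hc : 0 < c) (N : ℕ) (hN : 0 < N) :
    ⌊x / (c * N)⌋ = ⌊x / c⌋ / (N:ℤ) := by
  rw [show x / (c * N) = (x / c) / (N:ℝ) by rw [div_div], floor_div_nat' _ N hN]

/-! ### The grid construction -/

def idx (n : ℕ) (j : ℤ) (z : Fin n → ℂ) : Fin n → ℤ × ℤ :=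
  fun k => (⌊(z k).re / (2:ℝ)^j⌋, ⌊(z k).im / (2:ℝ)^j⌋)

def ctr (n : ℕ) (j : ℤ) (z : Fin n → ℂ) : Fin n → ℂ := cubeCenter n j (idx n j z)

def psi (n : ℕ) (j : ℤ) (z : Fin n → ℂ) : ℝ :=
  2 * ∑ k, ((ctr n j z k) * (starRingEnd ℂ) (z k)).im

def Dhat (n m : ℕ) (j : ℤ) (z : Fin n → ℂ) : ℝ :=
  (2:ℝ)^(2*(j-(m:ℤ))) *
    ⌊(psi n j (ctr n (j - (m:ℤ)) z) - psi n (j - (m:ℤ)) (ctr n (j - (m:ℤ)) z)) /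
      (2:ℝ)^(2*(j-(m:ℤ)))⌋

def phi (n m : ℕ) (j : ℤ) (z : Fin n → ℂ) : ℝ := ∑' i : ℕ, Dhat n m (j - (i:ℤ) * m) z

def tIdx (n m : ℕ) (j : ℤ) (p : Heis n) : ℤ := ⌊(p.2 + phi n m j p.1) / (2:ℝ)^(2*j)⌋

def Sset (n m : ℕ) (j : ℤ) (a : Fin n → ℤ × ℤ) (t : ℤ) : Set (Heis n) :=
  {p | idx n j p.1 = a ∧ tIdx n m j p = t}

variable {n : ℕ}

lemma cubeCenter_re (j : ℤ) (a : Fin n → ℤ × ℤ) (k : Fin n) :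
    (cubeCenter n j a k).re = (2:ℝ)^j * ((a k).1 : ℝ) + (2:ℝ)^(j-1) := by
  simp only [cubeCenter, Complex.add_re, Complex.ofReal_re, Complex.mul_re, Complex.I_re,
    Complex.I_im, Complex.ofReal_im]
  ring

lemma cubeCenter_im (j : ℤ) (a : Fin n → ℤ × ℤ) (k : Fin n) :
    (cubeCenter n j a k).im = (2:ℝ)^j * ((a k).2 : ℝ) + (2:ℝ)^(j-1) := by
  simp only [cubeCenter, Complex.add_im, Complex.ofReal_re, Complex.mul_im, Complex.I_re,
    Complex.I_im, Complex.ofReal_im]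
  ring

lemma mem_cube_iff {j : ℤ} {a : Fin n → ℤ × ℤ} {z : Fin n → ℂ} :
    z ∈ dyadicCube n j a ↔ idx n j z = a := by
  constructor
  · intro hz
    funext k
    have h := hz k
    have h1 : ⌊(z k).re / (2:ℝ)^j⌋ = (a k).1 := (floor_div_eq_iff (tzp j)).mpr h.1
    have h2 : ⌊(z k).im / (2:ℝ)^j⌋ = (a k).2 := (floor_div_eq_iff (tzp j)).mpr h.2
    simp [idx, h1, h2]
  · rintro rfl k
    exact ⟨(floor_div_eq_iff (tzp j)).mp rfl, (floor_div_eq_iff (tzp j)).mp rfl⟩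

lemma half_add_half (j : ℤ) : (2:ℝ)^(j-1) + (2:ℝ)^(j-1) = (2:ℝ)^j := by
  have h : (2:ℝ)^((j-1)+1) = 2^(j-1) * 2^(1:ℤ) := zpow_add₀ (two_ne_zero : (2:ℝ) ≠ 0) (j-1) 1
  norm_num at h
  linarith

lemma ctr_re_sub_le (j : ℤ) (z : Fin n → ℂ) (k : Fin n) :
    |(ctr n j z k).re - (z k).re| ≤ (2:ℝ)^(j-1) := by
  have h := floor_div_pieces ((z k).re) (tzp j)
  have hh := half_add_half j
  rw [ctr, cubeCenter_re]
  rw [abs_le]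
  constructor <;> [skip; skip] <;>
  · simp only [idx]
    nlinarith [h.1, h.2]

lemma ctr_im_sub_le (j : ℤ) (z : Fin n → ℂ) (k : Fin n) :
    |(ctr n j z k).im - (z k).im| ≤ (2:ℝ)^(j-1) := by
  have h := floor_div_pieces ((z k).im) (tzp j)
  have hh := half_add_half j
  rw [ctr, cubeCenter_im]
  rw [abs_le]
  constructor <;>
  · simp only [idx]
    nlinarith [h.1, h.2]

lemma idx_ctr (j : ℤ) (z : Fin n → ℂ) : idx n j (ctr n j z) = idx n j z := by
  funext k
  have hh := half_add_half j
  have h1 : ⌊(ctr n j z k).re / (2:ℝ)^j⌋ = (idx n j z k).1 := by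
    rw [floor_div_eq_iff (tzp j), ctr, cubeCenter_re]
    constructor <;> simp only [idx] <;> nlinarith [tzp (j-1)]
  have h2 : ⌊(ctr n j z k).im / (2:ℝ)^j⌋ = (idx n j z k).2 := by
    rw [floor_div_eq_iff (tzp j), ctr, cubeCenter_im]
    constructor <;> simp only [idx] <;> nlinarith [tzp (j-1)]
  simp only [idx] at h1 h2 ⊢
  rw [h1, h2]

lemma ctr_ctr (j : ℤ) (z : Fin n → ℂ) : ctr n j (ctr n j z) = ctr n j z := by
  rw [ctr, idx_ctr, ← ctr]

/-- coarse index is a function of fine index -/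
lemma idx_coarse (j : ℤ) (M : ℕ) {z z' : Fin n → ℂ}
    (h : idx n j z = idx n j z') : idx n (j + M) z = idx n (j + M) z' := by
  have key : ∀ x : ℝ, ⌊x / (2:ℝ)^(j + (M:ℤ))⌋ = ⌊x / (2:ℝ)^j⌋ / ((2^M : ℕ) : ℤ) := by
    intro x
    have : (2:ℝ)^(j + (M:ℤ)) = 2^j * ((2^M : ℕ) : ℝ) := by
      rw [zpow_add₀ (two_ne_zero : (2:ℝ) ≠ 0)]
      norm_num
    rw [this, floor_scale x (tzp j) (2^M) (pow_pos (by norm_num) M)]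
  funext k
  have h1 := congrFun h k
  simp only [idx, Prod.mk.injEq] at h1 ⊢
  rw [key, key, key, key, h1.1, h1.2]
  exact ⟨rfl, rfl⟩

/-! ### Size bounds -/

lemma tzple {i j : ℤ} (h : i ≤ j) : (2:ℝ)^i ≤ (2:ℝ)^j :=
  zpow_le_zpow_right₀ one_le_two h

lemma zpow2j (j : ℤ) : (2:ℝ)^(2*j) = ((2:ℝ)^j)^2 := by
  rw [two_mul, zpow_add₀ (two_ne_zero : (2:ℝ) ≠ 0), sq]

def Bz {n : ℕ} (z : Fin n → ℂ) : ℝ := ∑ k, (|(z k).re| + |(z k).im|)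

lemma Bz_nonneg (z : Fin n → ℂ) : 0 ≤ Bz z :=
  Finset.sum_nonneg fun k _ => by positivity

lemma im_mul_conj (a b : ℂ) : (a * (starRingEnd ℂ) b).im = a.im * b.re - a.re * b.im := by
  simp [Complex.mul_im]
  ring

lemma psi_abs_le (j : ℤ) (z : Fin n → ℂ) : |psi n j z| ≤ (2:ℝ)^j * Bz z := by
  have key : ∀ k : Fin n, |((ctr n j z k) * (starRingEnd ℂ) (z k)).im| ≤
      (2:ℝ)^(j-1) * (|(z k).re| + |(z k).im|) := by
    intro k
    rw [im_mul_conj]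
    have e : (ctr n j z k).im * (z k).re - (ctr n j z k).re * (z k).im
        = ((ctr n j z k).im - (z k).im) * (z k).re
          - ((ctr n j z k).re - (z k).re) * (z k).im := by ring
    rw [e]
    have h1 := ctr_re_sub_le j z k
    have h2 := ctr_im_sub_le j z k
    calc |((ctr n j z k).im - (z k).im) * (z k).re
          - ((ctr n j z k).re - (z k).re) * (z k).im|
        ≤ |((ctr n j z k).im - (z k).im) * (z k).re|
          + |((ctr n j z k).re - (z k).re) * (z k).im| := abs_sub _ _
      _ = |(ctr n j z k).im - (z k).im| * |(z k).re|
          + |(ctr n j z k).re - (z k).re| * |(z k).im| := by rw [abs_mul, abs_mul]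
      _ ≤ (2:ℝ)^(j-1) * |(z k).re| + (2:ℝ)^(j-1) * |(z k).im| := by
          have a1 := abs_nonneg ((z k).re)
          have a2 := abs_nonneg ((z k).im)
          have a3 := abs_nonneg ((ctr n j z k).im - (z k).im)
          have a4 := abs_nonneg ((ctr n j z k).re - (z k).re)
          nlinarith
      _ = (2:ℝ)^(j-1) * (|(z k).re| + |(z k).im|) := by ring
  have hsum : |∑ k, ((ctr n j z k) * (starRingEnd ℂ) (z k)).im| ≤ (2:ℝ)^(j-1) * Bz z := by
    calc |∑ k, ((ctr n j z k) * (starRingEnd ℂ) (z k)).im|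
        ≤ ∑ k, |((ctr n j z k) * (starRingEnd ℂ) (z k)).im| := Finset.abs_sum_le_sum_abs _ _
      _ ≤ ∑ k, (2:ℝ)^(j-1) * (|(z k).re| + |(z k).im|) := Finset.sum_le_sum fun k _ => key k
      _ = (2:ℝ)^(j-1) * Bz z := by rw [Bz, Finset.mul_sum]
  have hh := half_add_half j
  rw [psi, abs_mul, _root_.abs_of_nonneg (by norm_num : (0:ℝ) ≤ 2)]
  nlinarith [Bz_nonneg z]

lemma Bz_ctr_le (j : ℤ) (z : Fin n → ℂ) : Bz (ctr n j z) ≤ Bz z + n * (2:ℝ)^j := by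
  have hh := half_add_half j
  have key : ∀ k : Fin n, |(ctr n j z k).re| + |(ctr n j z k).im|
      ≤ (|(z k).re| + |(z k).im|) + (2:ℝ)^j := by
    intro k
    have h1 := ctr_re_sub_le j z k
    have h2 := ctr_im_sub_le j z k
    have e1 : |(ctr n j z k).re| ≤ |(z k).re| + |(ctr n j z k).re - (z k).re| := by
      calc |(ctr n j z k).re| = |(z k).re + ((ctr n j z k).re - (z k).re)| := by ring_nf
        _ ≤ _ := abs_add_le _ _
    have e2 : |(ctr n j z k).im| ≤ |(z k).im| + |(ctr n j z k).im - (z k).im| := by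
      calc |(ctr n j z k).im| = |(z k).im + ((ctr n j z k).im - (z k).im)| := by ring_nf
        _ ≤ _ := abs_add_le _ _
    linarith
  calc Bz (ctr n j z) ≤ ∑ k : Fin n, ((|(z k).re| + |(z k).im|) + (2:ℝ)^j) :=
        Finset.sum_le_sum fun k _ => key k
    _ = Bz z + n * (2:ℝ)^j := by
        rw [Finset.sum_add_distrib, Finset.sum_const, Finset.card_univ, Fintype.card_fin]
        rw [Bz, nsmul_eq_mul]

variable {m : ℕ}

lemma Dhat_abs_le (m : ℕ) (j : ℤ) (z : Fin n → ℂ) :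
    |Dhat n m j z| ≤ (2:ℝ)^j * (2 * Bz z + (2*n+1) * (2:ℝ)^j) := by
  set w := ctr n (j - (m:ℤ)) z with hw
  set E := (2:ℝ)^(2*(j-(m:ℤ))) with hE
  set y := psi n j w - psi n (j - (m:ℤ)) w with hy
  have hEpos : 0 < E := tzp _
  have hfl := floor_div_pieces y hEpos
  have habs : |Dhat n m j z| ≤ |y| + E := by
    rw [Dhat, ← hw, ← hE, ← hy, abs_le]
    constructor
    · nlinarith [neg_abs_le y]
    · nlinarith [le_abs_self y]
  have hBw : Bz w ≤ Bz z + n * (2:ℝ)^j := by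
    have h1 : Bz w ≤ Bz z + n * (2:ℝ)^(j - (m:ℤ)) := Bz_ctr_le _ z
    have h2 : (2:ℝ)^(j-(m:ℤ)) ≤ (2:ℝ)^j := tzple (by omega)
    have h3 : (0:ℝ) ≤ (n:ℝ) := Nat.cast_nonneg n
    nlinarith
  have hy1 : |y| ≤ (2:ℝ)^j * Bz w + (2:ℝ)^j * Bz w := by
    have ha := psi_abs_le j w
    have hb := psi_abs_le (j - (m:ℤ)) w
    have hc : (2:ℝ)^(j-(m:ℤ)) ≤ (2:ℝ)^j := tzple (by omega)
    have hd := Bz_nonneg w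
    calc |y| ≤ |psi n j w| + |psi n (j - (m:ℤ)) w| := abs_sub _ _
      _ ≤ _ := by nlinarith
  have hEle : E ≤ (2:ℝ)^j * (2:ℝ)^j := by
    rw [hE, ← sq, ← zpow2j]
    exact tzple (by omega)
  have h2j := tzp j
  nlinarith [Bz_nonneg w, Bz_nonneg z, Nat.cast_nonneg (α := ℝ) n, mul_le_mul_of_nonneg_left hBw (le_of_lt h2j)]

lemma zpow_split (j : ℤ) (i m : ℕ) :
    (2:ℝ)^(j - (i:ℤ)*(m:ℤ)) = (2:ℝ)^j * ((2:ℝ)^(-(m:ℤ)))^i := by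
  rw [← zpow_natCast ((2:ℝ)^(-(m:ℤ))) i, ← zpow_mul, ← zpow_add₀ (two_ne_zero : (2:ℝ) ≠ 0)]
  congr 1
  ring

lemma rub (hm : 1 ≤ m) : (2:ℝ)^(-(m:ℤ)) ≤ 1/2 := by
  have : (-(m:ℤ)) ≤ -1 := by omega
  calc (2:ℝ)^(-(m:ℤ)) ≤ (2:ℝ)^(-1:ℤ) := tzple this
    _ = 1/2 := by norm_num

lemma rpos : (0:ℝ) < (2:ℝ)^(-(m:ℤ)) := tzp _

lemma Dhat_bound_geom (j : ℤ) (z : Fin n → ℂ) (i : ℕ) :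
    ‖Dhat n m (j - (i:ℤ)*(m:ℤ)) z‖ ≤
      ((2:ℝ)^j * (2 * Bz z + (2*n+1) * (2:ℝ)^j)) * ((2:ℝ)^(-(m:ℤ)))^i := by
  rw [Real.norm_eq_abs]
  calc |Dhat n m (j - (i:ℤ)*(m:ℤ)) z|
      ≤ (2:ℝ)^(j - (i:ℤ)*(m:ℤ)) * (2 * Bz z + (2*n+1) * (2:ℝ)^(j - (i:ℤ)*(m:ℤ))) :=
        Dhat_abs_le m _ z
    _ ≤ (2:ℝ)^(j - (i:ℤ)*(m:ℤ)) * (2 * Bz z + (2*n+1) * (2:ℝ)^j) := by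
        have hb := Bz_nonneg z
        have hp := le_of_lt (tzp (j - (i:ℤ)*(m:ℤ)))
        have hx : (2:ℝ)^(j - (i:ℤ)*(m:ℤ)) ≤ (2:ℝ)^j :=
          tzple (sub_le_self j (mul_nonneg (Int.natCast_nonneg i) (Int.natCast_nonneg m)))
        have h3 : (0:ℝ) ≤ (n:ℝ) := Nat.cast_nonneg n
        nlinarith [mul_le_mul_of_nonneg_left hx hp]
    _ = ((2:ℝ)^j * (2 * Bz z + (2*n+1) * (2:ℝ)^j)) * ((2:ℝ)^(-(m:ℤ)))^i := by
        rw [zpow_split]; ring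

lemma summable_Dhat (hm : 1 ≤ m) (j : ℤ) (z : Fin n → ℂ) :
    Summable (fun i : ℕ => Dhat n m (j - (i:ℤ)*(m:ℤ)) z) := by
  refine Summable.of_norm_bounded ?_ (Dhat_bound_geom j z)
  apply Summable.mul_left
  exact summable_geometric_of_lt_one (le_of_lt rpos) (lt_of_le_of_lt (rub hm) (by norm_num))

lemma phi_rec (hm : 1 ≤ m) (j : ℤ) (z : Fin n → ℂ) :
    phi n m j z = Dhat n m j z + phi n m (j - (m:ℤ)) z := by
  rw [phi, Summable.tsum_eq_zero_add (summable_Dhat hm j z)]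
  congr 1
  · norm_num
  · rw [phi]
    apply tsum_congr
    intro i
    rw [show (j : ℤ) - ((i+1 : ℕ) : ℤ) * (m:ℤ) = (j - (m:ℤ)) - (i:ℤ)*(m:ℤ) from by push_cast; ring]

lemma phi_abs_le (hm : 1 ≤ m) (j : ℤ) (z : Fin n → ℂ) :
    |phi n m j z| ≤ 2 * ((2:ℝ)^j * (2 * Bz z + (2*n+1) * (2:ℝ)^j)) := by
  have hs : Summable (fun i : ℕ => ‖Dhat n m (j - (i:ℤ)*(m:ℤ)) z‖) := by
    apply Summable.of_nonneg_of_le (fun i => norm_nonneg _) (Dhat_bound_geom j z)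
    apply Summable.mul_left
    exact summable_geometric_of_lt_one (le_of_lt rpos) (lt_of_le_of_lt (rub hm) (by norm_num))
  set K := (2:ℝ)^j * (2 * Bz z + (2*n+1) * (2:ℝ)^j) with hK
  have hKnn : 0 ≤ K := by
    have := Bz_nonneg z
    positivity
  calc |phi n m j z| ≤ ∑' i : ℕ, ‖Dhat n m (j - (i:ℤ)*(m:ℤ)) z‖ := by
        rw [phi, ← Real.norm_eq_abs]
        exact norm_tsum_le_tsum_norm hs
    _ ≤ ∑' i : ℕ, K * ((2:ℝ)^(-(m:ℤ)))^i := by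
        apply Summable.tsum_le_tsum (Dhat_bound_geom j z) hs
        apply Summable.mul_left
        exact summable_geometric_of_lt_one (le_of_lt rpos) (lt_of_le_of_lt (rub hm) (by norm_num))
    _ = K * (1 - (2:ℝ)^(-(m:ℤ)))⁻¹ := by
        rw [tsum_mul_left, tsum_geometric_of_lt_one (le_of_lt rpos)
          (lt_of_le_of_lt (rub hm) (by norm_num))]
    _ ≤ K * 2 := by
        have h1 : (1 - (2:ℝ)^(-(m:ℤ)))⁻¹ ≤ (1/2)⁻¹ := by
          apply inv_anti₀
          · norm_num
          · have := rub (m := m) hm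
            linarith
        have : (1 - (2:ℝ)^(-(m:ℤ)))⁻¹ ≤ 2 := by norm_num at h1 ⊢; linarith
        nlinarith
    _ = 2 * K := by ring

/-! ### The key consistency error estimate -/

lemma step_bound (j : ℤ) (z : Fin n → ℂ) :
    |Dhat n m j z - (psi n j z - psi n (j - (m:ℤ)) z)|
      ≤ (2*n+1) * (2:ℝ)^(-(m:ℤ)) * (2:ℝ)^(2*j) := by
  set w := ctr n (j - (m:ℤ)) z with hw
  have hctrf : ctr n (j - (m:ℤ)) w = w := ctr_ctr _ z
  have hidxf : idx n (j - (m:ℤ)) w = idx n (j - (m:ℤ)) z := idx_ctr _ z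
  have hidxc : idx n j w = idx n j z := by
    have := idx_coarse (j - (m:ℤ)) m hidxf
    rwa [sub_add_cancel] at this
  have hctrc : ctr n j w = ctr n j z := by
    rw [ctr, hidxc, ← ctr]
  set E := (2:ℝ)^(2*(j-(m:ℤ))) with hE
  set y := psi n j w - psi n (j - (m:ℤ)) w with hy
  have hEpos : 0 < E := tzp _
  have hfl := floor_div_pieces y hEpos
  have hround : |Dhat n m j z - y| ≤ E := by
    rw [Dhat, ← hw, ← hE, ← hy, abs_le]
    constructor <;> nlinarith
  -- the per-coordinate bound
  set cj := ctr n j z with hcj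
  have hk : ∀ k : Fin n,
      |(cj k * (starRingEnd ℂ) (w k)).im - (w k * (starRingEnd ℂ) (w k)).im
        - (cj k * (starRingEnd ℂ) (z k)).im + (w k * (starRingEnd ℂ) (z k)).im|
      ≤ (2:ℝ)^j * (2:ℝ)^(j-(m:ℤ)-1) + (2:ℝ)^j * (2:ℝ)^(j-(m:ℤ)-1) := by
    intro k
    rw [im_mul_conj, im_mul_conj, im_mul_conj, im_mul_conj]
    have e : (cj k).im * (w k).re - (cj k).re * (w k).im
        - ((w k).im * (w k).re - (w k).re * (w k).im)
        - ((cj k).im * (z k).re - (cj k).re * (z k).im)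
        + ((w k).im * (z k).re - (w k).re * (z k).im)
        = ((cj k).im - (w k).im) * ((w k).re - (z k).re)
          - ((cj k).re - (w k).re) * ((w k).im - (z k).im) := by ring
    rw [e]
    have h1 := ctr_re_sub_le j z k
    have h2 := ctr_im_sub_le j z k
    have h3 := ctr_re_sub_le (j - (m:ℤ)) z k
    have h4 := ctr_im_sub_le (j - (m:ℤ)) z k
    rw [← hcj] at h1 h2
    rw [← hw] at h3 h4
    have hmono : (2:ℝ)^(j-(m:ℤ)-1) ≤ (2:ℝ)^(j-1) := tzple (by omega)
    have hhj := half_add_half j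
    have hA : |(cj k).im - (w k).im| ≤ (2:ℝ)^j := by
      calc |(cj k).im - (w k).im|
          = |((cj k).im - (z k).im) - ((w k).im - (z k).im)| := by ring_nf
        _ ≤ |(cj k).im - (z k).im| + |(w k).im - (z k).im| := abs_sub _ _
        _ ≤ (2:ℝ)^(j-1) + (2:ℝ)^(j-1) := by linarith
        _ = (2:ℝ)^j := hhj
    have hC : |(cj k).re - (w k).re| ≤ (2:ℝ)^j := by
      calc |(cj k).re - (w k).re|
          = |((cj k).re - (z k).re) - ((w k).re - (z k).re)| := by ring_nf
        _ ≤ |(cj k).re - (z k).re| + |(w k).re - (z k).re| := abs_sub _ _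
        _ ≤ (2:ℝ)^(j-1) + (2:ℝ)^(j-1) := by linarith
        _ = (2:ℝ)^j := hhj
    calc |((cj k).im - (w k).im) * ((w k).re - (z k).re)
          - ((cj k).re - (w k).re) * ((w k).im - (z k).im)|
        ≤ |((cj k).im - (w k).im) * ((w k).re - (z k).re)|
          + |((cj k).re - (w k).re) * ((w k).im - (z k).im)| := abs_sub _ _
      _ = |(cj k).im - (w k).im| * |(w k).re - (z k).re|
          + |(cj k).re - (w k).re| * |(w k).im - (z k).im| := by rw [abs_mul, abs_mul]
      _ ≤ (2:ℝ)^j * (2:ℝ)^(j-(m:ℤ)-1) + (2:ℝ)^j * (2:ℝ)^(j-(m:ℤ)-1) := by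
          have := abs_nonneg ((w k).re - (z k).re)
          have := abs_nonneg ((w k).im - (z k).im)
          have := abs_nonneg ((cj k).im - (w k).im)
          have := abs_nonneg ((cj k).re - (w k).re)
          have := le_of_lt (tzp j)
          nlinarith
  -- assembling the sum identity
  have hexp : y - (psi n j z - psi n (j - (m:ℤ)) z)
      = 2 * ∑ k : Fin n,
        ((cj k * (starRingEnd ℂ) (w k)).im - (w k * (starRingEnd ℂ) (w k)).im
          - (cj k * (starRingEnd ℂ) (z k)).im + (w k * (starRingEnd ℂ) (z k)).im) := by
    rw [hy, psi, psi, psi, psi, hctrc, hctrf, ← hcj, ← hw]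
    rw [Finset.sum_add_distrib, Finset.sum_sub_distrib, Finset.sum_sub_distrib]
    ring
  have hsum : |y - (psi n j z - psi n (j - (m:ℤ)) z)|
      ≤ 2 * (n * ((2:ℝ)^j * (2:ℝ)^(j-(m:ℤ)-1) + (2:ℝ)^j * (2:ℝ)^(j-(m:ℤ)-1))) := by
    rw [hexp, abs_mul, _root_.abs_of_nonneg (by norm_num : (0:ℝ) ≤ 2)]
    have : |∑ k : Fin n, ((cj k * (starRingEnd ℂ) (w k)).im - (w k * (starRingEnd ℂ) (w k)).im
          - (cj k * (starRingEnd ℂ) (z k)).im + (w k * (starRingEnd ℂ) (z k)).im)|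
        ≤ n * ((2:ℝ)^j * (2:ℝ)^(j-(m:ℤ)-1) + (2:ℝ)^j * (2:ℝ)^(j-(m:ℤ)-1)) := by
      calc |∑ k : Fin n, _| ≤ ∑ k : Fin n, |(cj k * (starRingEnd ℂ) (w k)).im
            - (w k * (starRingEnd ℂ) (w k)).im
            - (cj k * (starRingEnd ℂ) (z k)).im + (w k * (starRingEnd ℂ) (z k)).im| :=
          Finset.abs_sum_le_sum_abs _ _
        _ ≤ ∑ _k : Fin n, ((2:ℝ)^j * (2:ℝ)^(j-(m:ℤ)-1) + (2:ℝ)^j * (2:ℝ)^(j-(m:ℤ)-1)) :=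
          Finset.sum_le_sum fun k _ => hk k
        _ = n * ((2:ℝ)^j * (2:ℝ)^(j-(m:ℤ)-1) + (2:ℝ)^j * (2:ℝ)^(j-(m:ℤ)-1)) := by
          rw [Finset.sum_const, Finset.card_univ, Fintype.card_fin, nsmul_eq_mul]
    linarith
  -- final arithmetic
  have e1 : (2:ℝ)^j * (2:ℝ)^(j-(m:ℤ)-1) + (2:ℝ)^j * (2:ℝ)^(j-(m:ℤ)-1)
      = (2:ℝ)^(-(m:ℤ)) * (2:ℝ)^(2*j) := by
    have : (2:ℝ)^j * (2:ℝ)^(j-(m:ℤ)-1) = (2:ℝ)^(2*j-(m:ℤ)-1) := by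
      rw [← zpow_add₀ (two_ne_zero : (2:ℝ) ≠ 0)]
      congr 1
      ring
    rw [this, ← zpow_add₀ (two_ne_zero : (2:ℝ) ≠ 0)]
    rw [show -(m:ℤ) + 2*j = 2*j - (m:ℤ) from by ring]
    exact half_add_half (2*j - (m:ℤ))
  have e2 : E ≤ (2:ℝ)^(-(m:ℤ)) * (2:ℝ)^(2*j) := by
    rw [hE, ← zpow_add₀ (two_ne_zero : (2:ℝ) ≠ 0)]
    exact tzple (by omega)
  calc |Dhat n m j z - (psi n j z - psi n (j - (m:ℤ)) z)|
      ≤ |Dhat n m j z - y| + |y - (psi n j z - psi n (j - (m:ℤ)) z)| :=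
        abs_sub_le _ y _
    _ ≤ (2*n+1) * (2:ℝ)^(-(m:ℤ)) * (2:ℝ)^(2*j) := by
        rw [e1] at hsum
        nlinarith [hsum, hround, e2]

lemma err_step (hm : 1 ≤ m) (j : ℤ) (z : Fin n → ℂ) :
    |phi n m j z - psi n j z| ≤ |phi n m (j - (m:ℤ)) z - psi n (j - (m:ℤ)) z|
      + (2*n+1) * (2:ℝ)^(-(m:ℤ)) * (2:ℝ)^(2*j) := by
  have h1 := step_bound (m := m) j z
  have e : phi n m j z - psi n j z
      = (phi n m (j-(m:ℤ)) z - psi n (j-(m:ℤ)) z)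
        + (Dhat n m j z - (psi n j z - psi n (j-(m:ℤ)) z)) := by
    rw [phi_rec hm j z]; ring
  rw [e]
  calc |_ + _| ≤ |phi n m (j-(m:ℤ)) z - psi n (j-(m:ℤ)) z|
        + |Dhat n m j z - (psi n j z - psi n (j-(m:ℤ)) z)| := abs_add_le _ _
    _ ≤ _ := by linarith

lemma err_iter (hm : 1 ≤ m) (z : Fin n → ℂ) : ∀ (N : ℕ) (j : ℤ),
    |phi n m j z - psi n j z| ≤ |phi n m (j - (N:ℤ)*(m:ℤ)) z - psi n (j - (N:ℤ)*(m:ℤ)) z|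
      + 2 * ((2*n+1) * (2:ℝ)^(-(m:ℤ))) * (2:ℝ)^(2*j) := by
  intro N
  induction N with
  | zero =>
    intro j
    have e : j - ((0:ℕ):ℤ)*(m:ℤ) = j := by simp
    rw [e]
    have : (0:ℝ) ≤ 2 * ((2*n+1) * (2:ℝ)^(-(m:ℤ))) * (2:ℝ)^(2*j) := by positivity
    linarith
  | succ N ih =>
    intro j
    have h1 := err_step hm j z
    have h2 := ih (j - (m:ℤ))
    have hidx : (j - (m:ℤ)) - (N:ℤ)*(m:ℤ) = j - ((N+1:ℕ):ℤ)*(m:ℤ) := by push_cast; ring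
    rw [hidx] at h2
    have key : 2 * (2:ℝ)^(2*(j-(m:ℤ))) ≤ (2:ℝ)^(2*j) := by
      have e2 : (2:ℝ)^(2*(j-(m:ℤ))) * 2 = (2:ℝ)^(2*(j-(m:ℤ))+1) :=
        (zpow_add_one₀ (two_ne_zero : (2:ℝ) ≠ 0) _).symm
      have e3 : (2:ℝ)^(2*(j-(m:ℤ))+1) ≤ (2:ℝ)^(2*j) := tzple (by omega)
      linarith
    have hδ : (0:ℝ) ≤ (2*n+1) * (2:ℝ)^(-(m:ℤ)) := by positivity
    nlinarith [mul_le_mul_of_nonneg_left key hδ]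

lemma err_decay (hm : 1 ≤ m) (k : ℤ) (z : Fin n → ℂ) :
    |phi n m k z - psi n k z| ≤ (2:ℝ)^k * (5 * Bz z + (4*n+3) * (2:ℝ)^k) := by
  have h1 := phi_abs_le hm k z
  have h2 := psi_abs_le k z
  have h3 := tzp k
  have h4 := Bz_nonneg z
  calc |phi n m k z - psi n k z| ≤ |phi n m k z| + |psi n k z| := abs_sub _ _
    _ ≤ _ := by nlinarith

lemma err_tendsto (hm : 1 ≤ m) (j : ℤ) (z : Fin n → ℂ) :
    Filter.Tendsto (fun N : ℕ => |phi n m (j - (N:ℤ)*(m:ℤ)) z - psi n (j - (N:ℤ)*(m:ℤ)) z|)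
      Filter.atTop (nhds 0) := by
  apply squeeze_zero (g := fun N : ℕ =>
      ((2:ℝ)^j * (5 * Bz z + (4*n+3) * (2:ℝ)^j)) * ((2:ℝ)^(-(m:ℤ)))^N)
    (fun N => abs_nonneg _)
  · intro N
    have h1 := err_decay hm (j - (N:ℤ)*(m:ℤ)) z
    have hx : (2:ℝ)^(j - (N:ℤ)*(m:ℤ)) ≤ (2:ℝ)^j :=
      tzple (sub_le_self j (mul_nonneg (Int.natCast_nonneg N) (Int.natCast_nonneg m)))
    have hp := le_of_lt (tzp (j - (N:ℤ)*(m:ℤ)))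
    have hb := Bz_nonneg z
    have h3 : (0:ℝ) ≤ (n:ℝ) := Nat.cast_nonneg n
    calc |phi n m (j - (N:ℤ)*(m:ℤ)) z - psi n (j - (N:ℤ)*(m:ℤ)) z|
        ≤ (2:ℝ)^(j - (N:ℤ)*(m:ℤ)) * (5 * Bz z + (4*n+3) * (2:ℝ)^(j - (N:ℤ)*(m:ℤ))) := h1
      _ ≤ (2:ℝ)^(j - (N:ℤ)*(m:ℤ)) * (5 * Bz z + (4*n+3) * (2:ℝ)^j) := by
          nlinarith [mul_le_mul_of_nonneg_left hx hp]
      _ = ((2:ℝ)^j * (5 * Bz z + (4*n+3) * (2:ℝ)^j)) * ((2:ℝ)^(-(m:ℤ)))^N := by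
          rw [zpow_split]; ring
  · have h0 := le_of_lt (rpos (m := m))
    have h1 : (2:ℝ)^(-(m:ℤ)) < 1 := lt_of_le_of_lt (rub hm) (by norm_num)
    simpa using (tendsto_pow_atTop_nhds_zero_of_lt_one h0 h1).const_mul
      ((2:ℝ)^j * (5 * Bz z + (4*n+3) * (2:ℝ)^j))

lemma err_bound (hm : 1 ≤ m) (j : ℤ) (z : Fin n → ℂ) :
    |phi n m j z - psi n j z| ≤ 2 * ((2*n+1) * (2:ℝ)^(-(m:ℤ))) * (2:ℝ)^(2*j) := by
  have hwidth : Filter.Tendsto (fun N : ℕ =>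
      |phi n m (j - (N:ℤ)*(m:ℤ)) z - psi n (j - (N:ℤ)*(m:ℤ)) z|
        + 2 * ((2*n+1) * (2:ℝ)^(-(m:ℤ))) * (2:ℝ)^(2*j)) Filter.atTop
      (nhds (0 + 2 * ((2*n+1) * (2:ℝ)^(-(m:ℤ))) * (2:ℝ)^(2*j))) :=
    (err_tendsto hm j z).add tendsto_const_nhds
  have := ge_of_tendsto' hwidth (fun N => err_iter hm z N j)
  simpa using this

/-! ### Nestedness -/

lemma Dhat_congr (j : ℤ) {z z' : Fin n → ℂ}
    (h : idx n (j - (m:ℤ)) z = idx n (j - (m:ℤ)) z') : Dhat n m j z = Dhat n m j z' := by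
  rw [Dhat, ctr, h, ← ctr, ← Dhat]

lemma floor_shift_scale (x : ℝ) (j : ℤ) (M : ℕ) (d : ℤ) :
    ⌊(x + (2:ℝ)^(2*j)*d) / (2:ℝ)^(2*(j + (M:ℤ)))⌋
      = (⌊x / (2:ℝ)^(2*j)⌋ + d) / ((2^(2*M) : ℕ) : ℤ) := by
  have hsplit : (2:ℝ)^(2*(j + (M:ℤ))) = (2:ℝ)^(2*j) * ((2^(2*M):ℕ) : ℝ) := by
    push_cast
    rw [← zpow_natCast (2:ℝ) (2*M), ← zpow_add₀ (two_ne_zero : (2:ℝ) ≠ 0)]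
    congr 1
    push_cast
    ring
  rw [hsplit, floor_scale _ (tzp (2*j)) _ (pow_pos (by norm_num) _)]
  congr 1
  have e : (x + (2:ℝ)^(2*j)*d) / (2:ℝ)^(2*j) = x / (2:ℝ)^(2*j) + d := by
    rw [add_div, mul_div_cancel_left₀ _ (ne_of_gt (tzp (2*j)))]
  rw [e, Int.floor_add_intCast]

lemma key_step (hm : 1 ≤ m) (j : ℤ) (p q : Heis n)
    (h1 : idx n j p.1 = idx n j q.1) (h2 : tIdx n m j p = tIdx n m j q) :
    idx n (j + (m:ℤ)) p.1 = idx n (j + (m:ℤ)) q.1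
      ∧ tIdx n m (j + (m:ℤ)) p = tIdx n m (j + (m:ℤ)) q := by
  refine ⟨idx_coarse j m h1, ?_⟩
  obtain ⟨d, hdp⟩ : ∃ d : ℤ, Dhat n m (j + (m:ℤ)) p.1 = (2:ℝ)^(2*j) * d := by
    refine ⟨⌊(psi n (j+(m:ℤ)) (ctr n j p.1) - psi n j (ctr n j p.1)) / (2:ℝ)^(2*j)⌋, ?_⟩
    rw [Dhat, add_sub_cancel_right]
  have hD : Dhat n m (j + (m:ℤ)) q.1 = (2:ℝ)^(2*j) * d := by
    rw [← hdp]
    apply Dhat_congr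
    rw [add_sub_cancel_right]
    exact h1.symm
  have hphip : p.2 + phi n m (j + (m:ℤ)) p.1 = (p.2 + phi n m j p.1) + (2:ℝ)^(2*j)*d := by
    rw [phi_rec hm (j + (m:ℤ)) p.1, add_sub_cancel_right, hdp]
    ring
  have hphiq : q.2 + phi n m (j + (m:ℤ)) q.1 = (q.2 + phi n m j q.1) + (2:ℝ)^(2*j)*d := by
    rw [phi_rec hm (j + (m:ℤ)) q.1, add_sub_cancel_right, hD]
    ring
  rw [tIdx, tIdx, hphip, hphiq, floor_shift_scale, floor_shift_scale]
  rw [tIdx, tIdx] at h2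
  rw [h2]

lemma key_iter (hm : 1 ≤ m) (N : ℕ) (j : ℤ) (p q : Heis n)
    (h1 : idx n j p.1 = idx n j q.1) (h2 : tIdx n m j p = tIdx n m j q) :
    idx n (j + (N:ℤ)*(m:ℤ)) p.1 = idx n (j + (N:ℤ)*(m:ℤ)) q.1
      ∧ tIdx n m (j + (N:ℤ)*(m:ℤ)) p = tIdx n m (j + (N:ℤ)*(m:ℤ)) q := by
  induction N with
  | zero =>
    simpa using ⟨h1, h2⟩
  | succ N ih =>
    have e : j + ((N+1:ℕ):ℤ)*(m:ℤ) = (j + (N:ℤ)*(m:ℤ)) + (m:ℤ) := by push_cast; ring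
    rw [e]
    exact key_step hm _ p q ih.1 ih.2

lemma Sset_subset_or_disjoint (hm : 1 ≤ m) {j j' : ℤ} (hdvd : (m:ℤ) ∣ (j' - j)) (hle : j ≤ j')
    (a a' : Fin n → ℤ × ℤ) (t t' : ℤ) :
    Sset n m j a t ⊆ Sset n m j' a' t' ∨ Disjoint (Sset n m j a t) (Sset n m j' a' t') := by
  by_cases hdisj : Disjoint (Sset n m j a t) (Sset n m j' a' t')
  · exact Or.inr hdisj
  left
  obtain ⟨p, hp1, hp2⟩ := Set.not_disjoint_iff.mp hdisj
  obtain ⟨c, hc⟩ := hdvd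
  have hmpos : (0:ℤ) < (m:ℤ) := by exact_mod_cast hm
  have hc0 : 0 ≤ c := by
    by_contra hneg
    push_neg at hneg
    nlinarith [mul_le_mul_of_nonneg_left (show c ≤ -1 by omega) (le_of_lt hmpos)]
  set N := c.toNat with hNdef
  have hN : (N:ℤ) = c := Int.toNat_of_nonneg hc0
  have hj' : j' = j + (N:ℤ)*(m:ℤ) := by
    rw [hN]
    linarith [mul_comm c (m:ℤ)]
  intro q hq
  have h1 : idx n j q.1 = idx n j p.1 := by rw [hq.1, hp1.1]
  have h2 : tIdx n m j q = tIdx n m j p := by rw [hq.2, hp1.2]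
  obtain ⟨k1, k2⟩ := key_iter hm N j q p h1 h2
  rw [← hj'] at k1 k2
  exact ⟨by rw [k1, hp2.1], by rw [k2, hp2.2]⟩

/-! ### Metric lemmas -/

lemma hDist_eq (c p : Heis n) :
    hDist c p = ((∑ k, Complex.normSq (c.1 k - p.1 k)) ^ 2
      + (c.2 - p.2 - 2 * ∑ k, ((c.1 k) * (starRingEnd ℂ) (p.1 k)).im) ^ 2) ^ ((1:ℝ)/4) := by
  rw [hDist, hNorm]
  have e1 : ∑ k, Complex.normSq ((Hmul c (Hinv p)).1 k)
      = ∑ k, Complex.normSq (c.1 k - p.1 k) := by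
    apply Finset.sum_congr rfl
    intro k _
    have e : (Hmul c (Hinv p)).1 k = c.1 k - p.1 k := by
      simp [Hmul, Hinv, sub_eq_add_neg]
    rw [e]
  have e2 : (Hmul c (Hinv p)).2
      = c.2 - p.2 - 2 * ∑ k, ((c.1 k) * (starRingEnd ℂ) (p.1 k)).im := by
    simp only [Hmul, Hinv, Pi.neg_apply, map_neg, mul_neg, Finset.sum_neg_distrib,
      Complex.neg_im, Complex.im_sum]
    ring
  rw [e1, e2]

lemma rpow_quarter_lt {A r : ℝ} (hA : 0 ≤ A) (hr : 0 < r) :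
    A ^ ((1:ℝ)/4) < r ↔ A < r^4 := by
  have hA4 : (A ^ ((1:ℝ)/4))^(4:ℕ) = A := by
    rw [← Real.rpow_natCast (A ^ ((1:ℝ)/4)) 4, ← Real.rpow_mul hA]
    norm_num
  constructor
  · intro h
    calc A = (A ^ ((1:ℝ)/4))^(4:ℕ) := hA4.symm
      _ < r^(4:ℕ) := by
          apply pow_lt_pow_left₀ h (Real.rpow_nonneg hA _)
          norm_num
      _ = r^4 := by norm_num
  · intro h
    by_contra hle
    push_neg at hle
    have h2 : r^(4:ℕ) ≤ (A ^ ((1:ℝ)/4))^(4:ℕ) := pow_le_pow_left₀ hr.le hle 4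
    rw [hA4] at h2
    have : r^(4:ℕ) = r^4 := by norm_num
    linarith [h, h2, this ▸ h2]

lemma hDist_lt_iff {c p : Heis n} {r : ℝ} (hr : 0 < r) :
    hDist c p < r ↔ (∑ k, Complex.normSq (c.1 k - p.1 k)) ^ 2
      + (c.2 - p.2 - 2 * ∑ k, ((c.1 k) * (starRingEnd ℂ) (p.1 k)).im) ^ 2 < r^4 := by
  rw [hDist_eq]
  exact rpow_quarter_lt (by positivity) hr

lemma zpow_2jm1 (j : ℤ) : (2:ℝ)^(2*j-1) = (2:ℝ)^(2*j)/2 := by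
  have := half_add_half (2*j)
  linarith

lemma psi_eq_of_idx {j : ℤ} {a : Fin n → ℤ × ℤ} {z : Fin n → ℂ} (h : idx n j z = a) :
    psi n j z = 2 * ∑ k, ((cubeCenter n j a k) * (starRingEnd ℂ) (z k)).im := by
  rw [psi, ctr, h]

lemma Sset_subset_ball (hm : 1 ≤ m)
    (heps : 2 * ((2*(n:ℝ)+1) * (2:ℝ)^(-(m:ℤ))) ≤ 1/4) (j : ℤ) (a : Fin n → ℤ × ℤ) (t : ℤ) :
    Sset n m j a t ⊆ hBall (gridCenter n j a t) (((n:ℝ)+2) * (2:ℝ)^j) := by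
  intro p hp
  have hidx : idx n j p.1 = a := hp.1
  have ht : tIdx n m j p = t := hp.2
  set D := (2:ℝ)^(2*j) with hD
  have hDpos : 0 < D := tzp _
  have hhj := half_add_half j
  have key : ∀ k, Complex.normSq (cubeCenter n j a k - p.1 k) ≤ D/2 := by
    intro k
    have h1 := ctr_re_sub_le j p.1 k
    have h2 := ctr_im_sub_le j p.1 k
    have hc : ctr n j p.1 = cubeCenter n j a := by rw [ctr, hidx]
    rw [hc] at h1 h2
    rw [Complex.normSq_apply, Complex.sub_re, Complex.sub_im]
    have a1 : ((cubeCenter n j a k).re - (p.1 k).re)^2 ≤ ((2:ℝ)^(j-1))^2 :=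
      sq_le_sq' (by linarith [(abs_le.mp h1).1]) (abs_le.mp h1).2
    have a2 : ((cubeCenter n j a k).im - (p.1 k).im)^2 ≤ ((2:ℝ)^(j-1))^2 :=
      sq_le_sq' (by linarith [(abs_le.mp h2).1]) (abs_le.mp h2).2
    have e : ((2:ℝ)^(j-1))^2 + ((2:ℝ)^(j-1))^2 = D/2 := by
      rw [hD, zpow2j, show (2:ℝ)^(j-1) = 2^j/2 from by linarith]
      ring
    nlinarith [sq_nonneg ((cubeCenter n j a k).re - (p.1 k).re),
      sq_nonneg ((cubeCenter n j a k).im - (p.1 k).im)]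
  have hX : ∑ k, Complex.normSq (cubeCenter n j a k - p.1 k) ≤ n * (D/2) := by
    calc ∑ k, Complex.normSq (cubeCenter n j a k - p.1 k) ≤ ∑ _k : Fin n, D/2 :=
          Finset.sum_le_sum fun k _ => key k
      _ = n * (D/2) := by
          rw [Finset.sum_const, Finset.card_univ, Fintype.card_fin, nsmul_eq_mul]
  have hXnn : 0 ≤ ∑ k, Complex.normSq (cubeCenter n j a k - p.1 k) :=
    Finset.sum_nonneg fun k _ => Complex.normSq_nonneg _
  have herr : |phi n m j p.1 - psi n j p.1| ≤ (1/4) * D := by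
    have h1 := err_bound hm j p.1
    have h2 : 2 * ((2*(n:ℝ)+1) * (2:ℝ)^(-(m:ℤ))) * (2:ℝ)^(2*j) ≤ (1/4) * D := by
      rw [hD]
      nlinarith [tzp (2*j)]
    linarith
  have hfloor := (floor_div_eq_iff (x := p.2 + phi n m j p.1) hDpos).mp ht
  have hY : |D*t + D/2 - p.2 - psi n j p.1| ≤ D := by
    rw [abs_le]
    constructor <;> nlinarith [abs_le.mp herr, hfloor.1, hfloor.2]
  rw [hBall, Set.mem_setOf_eq, hDist_lt_iff (by positivity)]
  simp only [gridCenter]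
  rw [← psi_eq_of_idx hidx, zpow_2jm1, ← hD]
  have hY2 : (D*(t:ℝ) + D/2 - p.2 - psi n j p.1)^2 ≤ D^2 := by
    nlinarith [abs_le.mp hY]
  have hX2 : (∑ k, Complex.normSq (cubeCenter n j a k - p.1 k))^2 ≤ ((n:ℝ) * (D/2))^2 := by
    nlinarith
  have hcoef : ((n:ℝ))^2/4 + 1 < ((n:ℝ)+2)^4 := by
    have hx : (0:ℝ) ≤ (n:ℝ) := Nat.cast_nonneg n
    nlinarith [sq_nonneg ((n:ℝ)+2), sq_nonneg (((n:ℝ)+2)^2 - 1), sq_nonneg (n:ℝ)]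
  have hfin : ((n:ℝ) * (D/2))^2 + D^2 < ((n:ℝ)+2)^4 * D^2 := by
    have hD2 : 0 < D^2 := by positivity
    nlinarith [mul_lt_mul_of_pos_right hcoef hD2]
  have hD4 : (((n:ℝ)+2) * (2:ℝ)^j)^4 = ((n:ℝ)+2)^4 * D^2 := by
    rw [hD, zpow2j]
    ring
  rw [hD4]
  linarith

lemma ball_subset_Sset (hm : 1 ≤ m)
    (heps : 2 * ((2*(n:ℝ)+1) * (2:ℝ)^(-(m:ℤ))) ≤ 1/4) (j : ℤ) (a : Fin n → ℤ × ℤ) (t : ℤ) :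
    hBall (gridCenter n j a t) ((1/4) * (2:ℝ)^j) ⊆ Sset n m j a t := by
  intro p hp
  set D := (2:ℝ)^(2*j) with hD
  have hDpos : 0 < D := tzp _
  have hhj := half_add_half j
  have hjpos := tzp j
  rw [hBall, Set.mem_setOf_eq, hDist_lt_iff (by positivity)] at hp
  simp only [gridCenter] at hp
  rw [zpow_2jm1, ← hD] at hp
  have hr4 : ((1/4:ℝ) * (2:ℝ)^j)^4 = (D/16)^2 := by
    rw [hD, zpow2j]
    ring
  rw [hr4] at hp
  have hXnn : 0 ≤ ∑ k, Complex.normSq (cubeCenter n j a k - p.1 k) :=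
    Finset.sum_nonneg fun k _ => Complex.normSq_nonneg _
  set Y := D*(t:ℝ) + D/2 - p.2 - 2 * ∑ k, ((cubeCenter n j a k) * (starRingEnd ℂ) (p.1 k)).im
    with hYdef
  have hYsq : Y^2 < (D/16)^2 := by
    nlinarith [sq_nonneg (∑ k, Complex.normSq (cubeCenter n j a k - p.1 k)), hXnn]
  have hXlt : ∑ k, Complex.normSq (cubeCenter n j a k - p.1 k) < D/16 := by
    have hsq : (∑ k, Complex.normSq (cubeCenter n j a k - p.1 k))^2 < (D/16)^2 := by
      nlinarith [sq_nonneg Y]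
    exact lt_of_pow_lt_pow_left₀ 2 (by positivity) hsq
  have hcube : p.1 ∈ dyadicCube n j a := by
    intro k
    have hk : Complex.normSq (cubeCenter n j a k - p.1 k) < D/16 := by
      calc Complex.normSq (cubeCenter n j a k - p.1 k)
          ≤ ∑ i, Complex.normSq (cubeCenter n j a i - p.1 i) :=
            Finset.single_le_sum (f := fun i => Complex.normSq (cubeCenter n j a i - p.1 i))
              (fun i _ => Complex.normSq_nonneg _) (Finset.mem_univ k)
        _ < D/16 := hXlt
    rw [Complex.normSq_apply, Complex.sub_re, Complex.sub_im] at hk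
    have hd16 : D/16 = ((2:ℝ)^j/4)^2 := by
      rw [hD, zpow2j]
      ring
    rw [hd16] at hk
    have hre : |(cubeCenter n j a k).re - (p.1 k).re| < (2:ℝ)^j/4 := by
      apply lt_of_pow_lt_pow_left₀ 2 (by positivity)
      rw [_root_.sq_abs]
      nlinarith [mul_self_nonneg ((cubeCenter n j a k).im - (p.1 k).im)]
    have him : |(cubeCenter n j a k).im - (p.1 k).im| < (2:ℝ)^j/4 := by
      apply lt_of_pow_lt_pow_left₀ 2 (by positivity)
      rw [_root_.sq_abs]
      nlinarith [mul_self_nonneg ((cubeCenter n j a k).re - (p.1 k).re)]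
    rw [cubeCenter_re] at hre
    rw [cubeCenter_im] at him
    have hre' := abs_lt.mp hre
    have him' := abs_lt.mp him
    constructor
    · constructor <;> nlinarith [hre'.1, hre'.2]
    · constructor <;> nlinarith [him'.1, him'.2]
  have hidx : idx n j p.1 = a := mem_cube_iff.mp hcube
  have herr : |phi n m j p.1 - psi n j p.1| ≤ (1/4) * D := by
    have h1 := err_bound hm j p.1
    have h2 : 2 * ((2*(n:ℝ)+1) * (2:ℝ)^(-(m:ℤ))) * (2:ℝ)^(2*j) ≤ (1/4) * D := by
      rw [hD]
      nlinarith [tzp (2*j)]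
    linarith
  have hpsiY : Y = D*(t:ℝ) + D/2 - p.2 - psi n j p.1 := by
    rw [hYdef, psi_eq_of_idx hidx]
  have hYlt : |D*(t:ℝ) + D/2 - p.2 - psi n j p.1| < D/16 := by
    rw [← hpsiY]
    apply lt_of_pow_lt_pow_left₀ 2 (by positivity)
    rw [_root_.sq_abs]
    exact hYsq
  have hY' := abs_lt.mp hYlt
  have herr' := abs_le.mp herr
  refine ⟨hidx, ?_⟩
  rw [tIdx, ← hD, floor_div_eq_iff hDpos]
  constructor <;> nlinarith

/-! ### Measurability -/

lemma measurable_idx (j : ℤ) : Measurable (idx n j) := by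
  apply measurable_pi_lambda
  intro k
  apply Measurable.prodMk
  · exact ((Complex.measurable_re.comp (measurable_pi_apply k)).div_const _).floor
  · exact ((Complex.measurable_im.comp (measurable_pi_apply k)).div_const _).floor

lemma measurable_Dhat (j : ℤ) : Measurable (Dhat n m j) := by
  have e : Dhat n m j = (fun a : Fin n → ℤ × ℤ =>
      (2:ℝ)^(2*(j-(m:ℤ))) * ⌊(psi n j (cubeCenter n (j-(m:ℤ)) a)
        - psi n (j-(m:ℤ)) (cubeCenter n (j-(m:ℤ)) a)) / (2:ℝ)^(2*(j-(m:ℤ)))⌋)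
      ∘ (idx n (j-(m:ℤ))) := by
    funext z
    rfl
  rw [e]
  exact (measurable_of_countable _).comp (measurable_idx _)

lemma measurable_phi (hm : 1 ≤ m) (j : ℤ) : Measurable (phi n m j) := by
  have hpart : ∀ N : ℕ, Measurable (fun z : Fin n → ℂ =>
      ∑ i ∈ Finset.range N, Dhat n m (j - (i:ℤ)*(m:ℤ)) z) :=
    fun N => Finset.measurable_sum _ (fun i _ => measurable_Dhat _)
  apply measurable_of_tendsto_metrizable hpart
  rw [tendsto_pi_nhds]
  intro z
  exact (summable_Dhat hm j z).hasSum.tendsto_sum_nat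

lemma measurable_Sset (hm : 1 ≤ m) (j : ℤ) (a : Fin n → ℤ × ℤ) (t : ℤ) :
    MeasurableSet (Sset n m j a t) := by
  have h1 : Measurable fun p : Heis n => idx n j p.1 := (measurable_idx j).comp measurable_fst
  have h2 : Measurable fun p : Heis n => tIdx n m j p := by
    apply Measurable.floor
    exact (measurable_snd.add ((measurable_phi hm j).comp measurable_fst)).div_const _
  have e : Sset n m j a t = (fun p : Heis n => idx n j p.1) ⁻¹' {a}
      ∩ (fun p : Heis n => tIdx n m j p) ⁻¹' {t} := by
    ext p
    simp [Sset, Set.mem_setOf_eq]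
  rw [e]
  exact (h1 (measurableSet_singleton a)).inter (h2 (measurableSet_singleton t))

/-! ### The epsilon estimate for m = n+10 -/

lemma heps_final (n : ℕ) :
    2 * ((2*(n:ℝ)+1) * (2:ℝ)^(-((n+10:ℕ):ℤ))) ≤ 1/4 := by
  have hpow : ((n:ℝ)+1) ≤ (2:ℝ)^(n:ℕ) := by
    exact_mod_cast Nat.lt_two_pow_self (n := n)
  have e : (2:ℝ)^(-((n+10:ℕ):ℤ)) = ((2:ℝ)^((n+10:ℕ)))⁻¹ := by
    rw [zpow_neg, zpow_natCast]
  have hval : (2:ℝ)^((n+10:ℕ)) = 1024 * (2:ℝ)^(n:ℕ) := by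
    rw [pow_add]
    ring
  have hrpos : (0:ℝ) < (2:ℝ)^((n+10:ℕ)) := by positivity
  have hbig : 8*(2*(n:ℝ)+1) ≤ (2:ℝ)^((n+10:ℕ)) := by
    rw [hval]
    nlinarith
  have hinv : (0:ℝ) < ((2:ℝ)^((n+10:ℕ)))⁻¹ := by positivity
  have h1 : 8*(2*(n:ℝ)+1) * ((2:ℝ)^((n+10:ℕ)))⁻¹ ≤ (2:ℝ)^((n+10:ℕ)) * ((2:ℝ)^((n+10:ℕ)))⁻¹ :=
    mul_le_mul_of_nonneg_right hbig (le_of_lt hinv)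
  rw [mul_inv_cancel₀ (ne_of_gt hrpos)] at h1
  rw [e]
  linarith

end HG

open HG

/-- **Existence of a Heisenberg dyadic grid** (Theorem on the Heisenberg grid):
there are a positive integer `m` and constants `0 < C₁ ≤ C₂`, depending only on `n`,
such that `ℍⁿ` admits a Heisenberg dyadic grid with parameters `(m, C₁, C₂)`. -/
theorem exists_heisenberg_dyadic_grid (n : ℕ) (hn : 0 < n) :
    ∃ (m : ℕ) (C₁ C₂ : ℝ), 0 < m ∧ 0 < C₁ ∧ C₁ ≤ C₂ ∧
      Nonempty (HeisGrid n m C₁ C₂) := by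
  refine ⟨n + 10, 1/4, (n:ℝ) + 2, by omega, by norm_num, ?_, ⟨?_⟩⟩
  · have : (0:ℝ) ≤ (n:ℝ) := Nat.cast_nonneg n
    linarith
  have hm : 1 ≤ n + 10 := by omega
  have heps := heps_final n
  refine {
    S := Sset n (n+10)
    measurableSet_S := fun j a t => measurable_Sset hm j a t
    existsUnique_mem := ?_
    proj_eq := ?_
    ball_subset := fun j _ a t => ball_subset_Sset hm heps j a t
    subset_ball := fun j _ a t => Sset_subset_ball hm heps j a t
    nested := ?_ }
  · intro j _ p
    refine ⟨⟨idx n j p.1, tIdx n (n+10) j p⟩, ⟨rfl, rfl⟩, ?_⟩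
    rintro ⟨a, t⟩ ⟨ha, ht⟩
    simp only [Prod.mk.injEq]
    exact ⟨ha.symm, ht.symm⟩
  · intro j _ a t
    ext z
    constructor
    · rintro ⟨p, hp, rfl⟩
      exact mem_cube_iff.mpr hp.1
    · intro hz
      refine ⟨(z, (2:ℝ)^(2*j)*t - phi n (n+10) j z), ⟨mem_cube_iff.mp hz, ?_⟩, rfl⟩
      rw [tIdx]
      have e : ((2:ℝ)^(2*j)*t - phi n (n+10) j z + phi n (n+10) j z) / (2:ℝ)^(2*j) = (t:ℝ) := by
        field_simp
        ring
      rw [e, Int.floor_intCast]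
  · intro j j' hj hj' a a' t t'
    rcases le_total j j' with h | h
    · rcases Sset_subset_or_disjoint hm (dvd_sub hj' hj) h a a' t t' with hs | hd
      · exact Or.inl hs
      · exact Or.inr (Or.inr hd)
    · rcases Sset_subset_or_disjoint hm (dvd_sub hj hj') h a' a t' t with hs | hd
      · exact Or.inr (Or.inl hs)
      · exact Or.inr (Or.inr hd.symm)
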